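/- Let A be an n×n max-plus matrix with finite spectral radius λ, g a vector, and h a regular vector with h⁻ ⊗ g ≤ 0. Define θ = λ ⊕ max_{1≤k≤n} (1/k)·(h⁻ ⊗ A^k ⊗ g). Then θ is the minimum of x⁻ ⊗ A ⊗ x over all regular vectors x with g ≤ x ≤ h, attained exactly at the vectors x = ((-θ)⊗A)* ⊗ u for regular u with g ≤ u ≤ (h⁻ ⊗ ((-θ)⊗A)*)⁻. -/

import Mathlib

noncomputable section

/-- Max-plus carrier: ℝ ∪ {-∞}. Addition ⊕ is `max`, multiplication ⊗ is `+`
(with ⊥ = -∞ absorbing), zero is ⊥ and unit is `(0 : ℝ)`. -/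
abbrev MP := WithBot ℝ

/-- Multiplicative conjugate: negate a finite value, send -∞ to -∞. -/
def mpInv (a : MP) : MP := a.map (fun t => -t)

/-- Max-plus matrix product. -/
def mpMulM {l m n : ℕ} (A : Fin l → Fin m → MP) (B : Fin m → Fin n → MP) :
    Fin l → Fin n → MP := fun i j => Finset.univ.sup fun k => A i k + B k j

/-- Max-plus matrix-vector product. -/
def mpMulV {m n : ℕ} (A : Fin m → Fin n → MP) (x : Fin n → MP) : Fin m → MP :=
  fun i => Finset.univ.sup fun j => A i j + x j

/-- Max-plus identity matrix. -/
def mpId {n : ℕ} : Fin n → Fin n → MP := fun i j => if i = j then ((0:ℝ) : MP) else ⊥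

/-- Max-plus matrix power. -/
def mpPow {n : ℕ} (A : Fin n → Fin n → MP) : ℕ → (Fin n → Fin n → MP)
  | 0 => mpId
  | k+1 => mpMulM (mpPow A k) A

/-- Max-plus trace. -/
def mpTr {n : ℕ} (A : Fin n → Fin n → MP) : MP := Finset.univ.sup fun i => A i i

/-- Tr(A) = tr A ⊕ tr A² ⊕ ⋯ ⊕ tr Aⁿ. -/
def mpTR {n : ℕ} (A : Fin n → Fin n → MP) : MP :=
  (Finset.Icc 1 n).sup fun m => mpTr (mpPow A m)

/-- Kleene star A* = I ⊕ A ⊕ ⋯ ⊕ A^{n-1}. -/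
def mpStar {n : ℕ} (A : Fin n → Fin n → MP) : Fin n → Fin n → MP :=
  fun i j => (Finset.range n).sup fun k => mpPow A k i j

/-- Max-plus spectral radius λ = max_{1≤m≤n} tr(A^m)^{1/m}. -/
def mpLam {n : ℕ} (A : Fin n → Fin n → MP) : MP :=
  (Finset.Icc 1 n).sup fun m => (mpTr (mpPow A m)).map (fun t => t / (m : ℝ))

/-- The alternating product B^{i₀} A B^{i₁} A ⋯ A B^{iₖ}. -/
def mpChain {n : ℕ} (A B : Fin n → Fin n → MP) : (k : ℕ) → (Fin (k+1) → ℕ) → (Fin n → Fin n → MP)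
  | 0, i => mpPow B (i 0)
  | (k+1), i => mpMulM (mpChain A B k (fun j => i j.castSucc)) (mpMulM A (mpPow B (i (Fin.last (k+1)))))

-- basic sup/add distribution lemmas
lemma mp_sup_add {ι} (s : Finset ι) (f : ι → MP) (c : MP) :
    s.sup f + c = s.sup fun i => f i + c :=
  Finset.comp_sup_eq_sup_comp (· + c) (fun a b => by
    rcases le_total a b with h | h
    · rw [sup_eq_right.2 h, sup_eq_right.2 (add_le_add_left h c)]
    · rw [sup_eq_left.2 h, sup_eq_left.2 (add_le_add_left h c)]) (WithBot.bot_add c)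

lemma mp_add_sup {ι} (s : Finset ι) (f : ι → MP) (c : MP) :
    c + s.sup f = s.sup fun i => c + f i :=
  Finset.comp_sup_eq_sup_comp (c + ·) (fun a b => by
    rcases le_total a b with h | h
    · rw [sup_eq_right.2 h, sup_eq_right.2 (add_le_add_right h c)]
    · rw [sup_eq_left.2 h, sup_eq_left.2 (add_le_add_right h c)]) (WithBot.add_bot c)

lemma mp_nsmul_coe (m : ℕ) (c : ℝ) : m • ((c : ℝ) : MP) = ((m * c : ℝ) : MP) := by
  induction m with
  | zero => simp
  | succ k ih => rw [succ_nsmul, ih, ← WithBot.coe_add]; congr 1; push_cast; ring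

lemma mp_nsmul_bot (m : ℕ) (hm : 1 ≤ m) : m • (⊥ : MP) = ⊥ := by
  obtain ⟨k, rfl⟩ := Nat.exists_eq_add_of_le hm
  rw [add_comm, succ_nsmul, WithBot.add_bot]

lemma mp_conj_cancel (a : ℝ) (M : MP) : ((-a : ℝ) : MP) + M + (a : MP) = M := by
  rw [add_comm _ M, add_assoc, ← WithBot.coe_add]; norm_num

-- matrix algebra
lemma mpMulM_id {n : ℕ} (A : Fin n → Fin n → MP) : mpMulM mpId A = A := by
  funext i j
  apply le_antisymm
  · apply Finset.sup_le
    intro k _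
    by_cases hk : i = k
    · subst hk; simp [mpId]
    · simp [mpId, hk, WithBot.bot_add]
  · simpa [mpId, mpMulM] using Finset.le_sup (f := fun k => mpId i k + A k j) (Finset.mem_univ i)

lemma mpId_mulM {n : ℕ} (A : Fin n → Fin n → MP) : mpMulM A mpId = A := by
  funext i j
  apply le_antisymm
  · apply Finset.sup_le
    intro k _
    by_cases hk : k = j
    · subst hk; simp [mpId]
    · simp [mpId, hk, WithBot.add_bot]
  · simpa [mpId, mpMulM] using Finset.le_sup (f := fun k => A i k + mpId k j) (Finset.mem_univ j)

lemma mpMulM_assoc {n : ℕ} (A B C : Fin n → Fin n → MP) :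
    mpMulM (mpMulM A B) C = mpMulM A (mpMulM B C) := by
  funext i j
  show Finset.univ.sup (fun l => (Finset.univ.sup fun k => A i k + B k l) + C l j)
      = Finset.univ.sup fun k => A i k + Finset.univ.sup fun l => B k l + C l j
  calc Finset.univ.sup (fun l => (Finset.univ.sup fun k => A i k + B k l) + C l j)
      = Finset.univ.sup (fun l => Finset.univ.sup fun k => A i k + B k l + C l j) := by
        simp only [mp_sup_add]
    _ = Finset.univ.sup (fun k => Finset.univ.sup fun l => A i k + B k l + C l j) :=
        Finset.sup_comm _ _ _
    _ = Finset.univ.sup fun k => A i k + Finset.univ.sup fun l => B k l + C l j := by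
        simp only [mp_add_sup, add_assoc]

lemma mpPow_succ' {n : ℕ} (A : Fin n → Fin n → MP) (k : ℕ) :
    mpPow A (k+1) = mpMulM A (mpPow A k) := by
  induction k with
  | zero => show mpMulM mpId A = mpMulM A mpId; rw [mpMulM_id, mpId_mulM]
  | succ m ih =>
    show mpMulM (mpPow A (m+1)) A = _
    rw [ih, mpMulM_assoc, ← ih]
    rfl

-- path weights
def pw {n : ℕ} (M : Fin n → Fin n → MP) (m : ℕ) (p : ℕ → Fin n) : MP :=
  ∑ t ∈ Finset.range m, M (p t) (p (t+1))

lemma pw_le_pow {n : ℕ} (M : Fin n → Fin n → MP) :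
    ∀ (m : ℕ) (p : ℕ → Fin n), pw M m p ≤ mpPow M m (p 0) (p m) := by
  intro m
  induction m with
  | zero => intro p; simp [pw, mpPow, mpId]
  | succ k ih =>
    intro p
    rw [pw, Finset.sum_range_succ]
    calc (∑ t ∈ Finset.range k, M (p t) (p (t+1))) + M (p k) (p (k+1))
        ≤ mpPow M k (p 0) (p k) + M (p k) (p (k+1)) := add_le_add_left (ih p) _
      _ ≤ mpPow M (k+1) (p 0) (p (k+1)) :=
          Finset.le_sup (f := fun l => mpPow M k (p 0) l + M l (p (k+1))) (Finset.mem_univ (p k))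

lemma pow_attained {n : ℕ} (hn : 0 < n) (M : Fin n → Fin n → MP) :
    ∀ (m : ℕ) (i j : Fin n), mpPow M m i j ≠ ⊥ →
      ∃ p : ℕ → Fin n, p 0 = i ∧ p m = j ∧ mpPow M m i j = pw M m p := by
  have : Nonempty (Fin n) := ⟨⟨0, hn⟩⟩
  intro m
  induction m with
  | zero =>
    intro i j hne
    by_cases hij : i = j
    · subst hij
      exact ⟨fun _ => i, rfl, rfl, by simp [pw, mpPow, mpId]⟩
    · simp [mpPow, mpId, hij] at hne
  | succ k ih =>
    intro i j hne
    obtain ⟨l, -, hl⟩ := Finset.exists_mem_eq_sup Finset.univ Finset.univ_nonempty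
      (fun l => mpPow M k i l + M l j)
    have hterm : mpPow M (k+1) i j = mpPow M k i l + M l j := hl
    have hkl : mpPow M k i l ≠ ⊥ := by
      intro hb
      rw [hterm, hb, WithBot.bot_add] at hne
      exact hne rfl
    obtain ⟨p, hp0, hpk, hpw⟩ := ih i l hkl
    refine ⟨fun t => if t ≤ k then p t else j, by simp [hp0], by simp, ?_⟩
    rw [hterm, pw, Finset.sum_range_succ]
    have : ∀ t ∈ Finset.range k,
        M ((fun t => if t ≤ k then p t else j) t) ((fun t => if t ≤ k then p t else j) (t+1))
          = M (p t) (p (t+1)) := by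
      intro t ht
      have ht' := Finset.mem_range.1 ht
      simp [Nat.le_of_lt ht', Nat.succ_le_of_lt ht']
    rw [Finset.sum_congr rfl this, ← pw, ← hpw]
    simp [Nat.lt_irrefl, hpk]

lemma pow_n_le_star {n : ℕ} (hn : 0 < n) (M : Fin n → Fin n → MP)
    (htr : ∀ t, 1 ≤ t → t ≤ n → mpTr (mpPow M t) ≤ 0) (i j : Fin n) :
    mpPow M n i j ≤ mpStar M i j := by
  by_cases hb : mpPow M n i j = ⊥
  · rw [hb]; exact bot_le
  obtain ⟨p, hp0, hpn, hpw⟩ := pow_attained hn M n i j hb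
  -- pigeonhole: two equal values among p 0, ..., p n
  obtain ⟨a, b, hab, hpab⟩ := Fintype.exists_ne_map_eq_of_card_lt
    (fun t : Fin (n+1) => p t) (by simp)
  wlog hlt : (a : ℕ) < (b : ℕ) generalizing a b
  · exact this b a hab.symm hpab.symm (by by_contra h; exact absurd (lt_of_le_of_ne (not_lt.1 hlt) (fun he => hab (Fin.ext he.symm))) h)
  set na := (a : ℕ) with hna
  set nb := (b : ℕ) with hnb
  have hbn : nb ≤ n := Nat.lt_succ_iff.1 b.isLt
  set d := nb - na with hd
  have hd1 : 1 ≤ d := by omega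
  have hdn : d ≤ n := by omega
  have hadb : na + d = nb := by omega
  set m' := n - d with hm'
  have ham : na ≤ m' := by omega
  have hmd : m' + d = n := by omega
  have hmn : m' < n := by omega
  set q : ℕ → Fin n := fun t => if t < na then p t else p (t + d) with hqdef
  have hq : ∀ t, t ≤ na → q t = p t := by
    intro t ht
    rcases lt_or_eq_of_le ht with h | h
    · simp [hqdef, h]
    · subst h; simp [hqdef, hadb, ← hpab]
  have hq0 : q 0 = i := by rw [hq 0 (Nat.zero_le _), hp0]
  have hqm : q m' = j := by
    have : ¬ m' < na := by omega
    simp only [hqdef, this, if_false, hmd, hpn]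
  -- cycle weight ≤ 0
  have hcyc : (∑ t ∈ Finset.Ico na nb, M (p t) (p (t+1))) ≤ 0 := by
    have hre : (∑ t ∈ Finset.Ico na nb, M (p t) (p (t+1)))
        = pw M d (fun t => p (t + na)) := by
      rw [Finset.sum_Ico_eq_sum_range, pw]
      apply Finset.sum_congr (by rw [hd]) (fun t _ => by ring_nf)
    have h1 := pw_le_pow M d (fun t => p (t + na))
    rw [show d + na = nb by omega] at h1
    simp only [Nat.zero_add] at h1
    rw [hre]
    refine h1.trans ?_
    rw [← hpab]
    exact (Finset.le_sup (f := fun i => mpPow M d i i) (Finset.mem_univ (p na))).trans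
      (htr d hd1 hdn)
  -- split and compare weights
  have hsplit : pw M n p = ((∑ t ∈ Finset.Ico 0 na, M (p t) (p (t+1)))
      + ∑ t ∈ Finset.Ico na nb, M (p t) (p (t+1)))
      + ∑ t ∈ Finset.Ico nb n, M (p t) (p (t+1)) := by
    rw [pw, Finset.range_eq_Ico,
      ← Finset.sum_Ico_consecutive _ (Nat.zero_le nb) hbn,
      ← Finset.sum_Ico_consecutive _ (Nat.zero_le na) (le_of_lt hlt)]
  have hqsplit : pw M m' q = (∑ t ∈ Finset.Ico 0 na, M (p t) (p (t+1)))
      + ∑ t ∈ Finset.Ico nb n, M (p t) (p (t+1)) := by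
    rw [pw, Finset.range_eq_Ico, ← Finset.sum_Ico_consecutive _ (Nat.zero_le na) ham]
    congr 1
    · apply Finset.sum_congr rfl
      intro t ht
      obtain ⟨-, ht2⟩ := Finset.mem_Ico.1 ht
      rw [hq t (le_of_lt ht2), hq (t+1) (Nat.succ_le_of_lt ht2)]
    · rw [Finset.sum_Ico_eq_sum_range, Finset.sum_Ico_eq_sum_range]
      apply Finset.sum_congr (by rw [show m' - na = n - nb by omega])
      intro t _
      have h1 : ¬ na + t < na := by omega
      have h2 : ¬ na + t + 1 < na := by omega
      simp only [hqdef, h1, h2, if_false]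
      congr 2 <;> omega
  have hle : pw M n p ≤ pw M m' q := by
    rw [hsplit, hqsplit]
    calc ((∑ t ∈ Finset.Ico 0 na, M (p t) (p (t+1)))
          + ∑ t ∈ Finset.Ico na nb, M (p t) (p (t+1)))
          + ∑ t ∈ Finset.Ico nb n, M (p t) (p (t+1))
        ≤ ((∑ t ∈ Finset.Ico 0 na, M (p t) (p (t+1))) + 0)
          + ∑ t ∈ Finset.Ico nb n, M (p t) (p (t+1)) :=
          add_le_add_left (add_le_add_right hcyc _) _
      _ = _ := by rw [add_zero]
  calc mpPow M n i j = pw M n p := hpw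
    _ ≤ pw M m' q := hle
    _ ≤ mpPow M m' (q 0) (q m') := pw_le_pow M m' q
    _ = mpPow M m' i j := by rw [hq0, hqm]
    _ ≤ mpStar M i j := Finset.le_sup (f := fun k => mpPow M k i j) (Finset.mem_range.2 hmn)

-- conjugation
lemma mpPow_conj {n : ℕ} (A : Fin n → Fin n → MP) (x : Fin n → ℝ) (m : ℕ) :
    mpPow (fun i j => ((-(x i) : ℝ) : MP) + A i j + (x j : MP)) m
      = fun i j => ((-(x i) : ℝ) : MP) + mpPow A m i j + (x j : MP) := by
  induction m with
  | zero =>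
    funext i j
    by_cases hij : i = j
    · subst hij; simp only [mpPow, mpId, if_pos rfl]
      rw [add_comm, ← add_assoc, ← WithBot.coe_add]
      norm_num
    · simp [mpPow, mpId, hij, WithBot.add_bot, WithBot.bot_add]
  | succ k ih =>
    funext i j
    change Finset.univ.sup (fun l => mpPow (fun i j => ((-(x i) : ℝ) : MP) + A i j + (x j : MP)) k i l
      + (((-(x l) : ℝ) : MP) + A l j + (x j : MP))) = _
    simp only [ih]
    have hterm : ∀ l : Fin n,
        (((-(x i) : ℝ) : MP) + mpPow A k i l + (x l : MP))
          + (((-(x l) : ℝ) : MP) + A l j + (x j : MP))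
        = ((-(x i) : ℝ) : MP) + (mpPow A k i l + A l j) + (x j : MP) := by
      intro l
      have h1 : ((x l : ℝ) : MP) + (((-(x l) : ℝ) : MP)) = ((0:ℝ) : MP) := by
        rw [← WithBot.coe_add]; norm_num
      calc (((-(x i) : ℝ) : MP) + mpPow A k i l + (x l : MP))
            + (((-(x l) : ℝ) : MP) + A l j + (x j : MP))
          = ((-(x i) : ℝ) : MP) + ((mpPow A k i l + ((x l : MP) + ((-(x l) : ℝ) : MP)))
              + A l j) + (x j : MP) := by
            simp only [add_assoc, add_comm, add_left_comm]
        _ = ((-(x i) : ℝ) : MP) + (mpPow A k i l + A l j) + (x j : MP) := by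
            rw [h1, WithBot.coe_zero, add_zero]
    calc Finset.univ.sup (fun l => (((-(x i) : ℝ) : MP) + mpPow A k i l + (x l : MP))
            + (((-(x l) : ℝ) : MP) + A l j + (x j : MP)))
        = Finset.univ.sup (fun l => ((-(x i) : ℝ) : MP) + (mpPow A k i l + A l j) + (x j : MP)) := by
          exact Finset.sup_congr rfl (fun l _ => hterm l)
      _ = ((-(x i) : ℝ) : MP) + Finset.univ.sup (fun l => mpPow A k i l + A l j) + (x j : MP) := by
          rw [mp_add_sup, mp_sup_add]
      _ = _ := rfl

-- scalar shift of a matrix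
lemma mpPow_shift {n : ℕ} (A : Fin n → Fin n → MP) (c : ℝ) (m : ℕ) :
    mpPow (fun p q => ((c : ℝ) : MP) + A p q) m
      = fun i j => (((m : ℝ) * c : ℝ) : MP) + mpPow A m i j := by
  induction m with
  | zero =>
    funext i j
    by_cases hij : i = j
    · subst hij; simp [mpPow, mpId]
    · simp [mpPow, mpId, hij, WithBot.add_bot]
  | succ k ih =>
    funext i j
    change Finset.univ.sup (fun l => mpPow (fun p q => ((c : ℝ) : MP) + A p q) k i l
      + (((c : ℝ) : MP) + A l j)) = _
    simp only [ih]
    have hterm : ∀ l : Fin n,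
        ((((k : ℝ) * c : ℝ) : MP) + mpPow A k i l) + (((c : ℝ) : MP) + A l j)
        = ((((k : ℝ) + 1) * c : ℝ) : MP) + (mpPow A k i l + A l j) := by
      intro l
      rw [add_add_add_comm, ← WithBot.coe_add]
      congr 2
      ring
    calc Finset.univ.sup (fun l => ((((k:ℝ) * c : ℝ) : MP) + mpPow A k i l) + (((c:ℝ):MP) + A l j))
        = Finset.univ.sup (fun l => ((((k:ℝ) + 1) * c : ℝ) : MP) + (mpPow A k i l + A l j)) :=
          Finset.sup_congr rfl (fun l _ => hterm l)
      _ = ((((k:ℝ) + 1) * c : ℝ) : MP) + Finset.univ.sup (fun l => mpPow A k i l + A l j) := by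
          rw [mp_add_sup]
      _ = _ := by rw [show ((k:ℝ)+1) = (((k+1 : ℕ):ℝ)) by push_cast; ring]; rfl

-- vector lemmas
lemma mpMulV_assoc {n : ℕ} (P Q : Fin n → Fin n → MP) (v : Fin n → MP) :
    mpMulV (mpMulM P Q) v = mpMulV P (mpMulV Q v) := by
  funext i
  show Finset.univ.sup (fun j => (Finset.univ.sup fun l => P i l + Q l j) + v j) = _
  calc Finset.univ.sup (fun j => (Finset.univ.sup fun l => P i l + Q l j) + v j)
      = Finset.univ.sup (fun j => Finset.univ.sup fun l => P i l + Q l j + v j) := by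
        simp only [mp_sup_add]
    _ = Finset.univ.sup (fun l => Finset.univ.sup fun j => P i l + Q l j + v j) :=
        Finset.sup_comm _ _ _
    _ = Finset.univ.sup (fun l => P i l + Finset.univ.sup fun j => Q l j + v j) := by
        simp only [mp_add_sup, add_assoc]
    _ = _ := rfl

lemma mpMulV_mono {n : ℕ} (P : Fin n → Fin n → MP) {v w : Fin n → MP}
    (hvw : ∀ j, v j ≤ w j) (i : Fin n) : mpMulV P v i ≤ mpMulV P w i :=
  Finset.sup_le fun j _ =>
    (add_le_add_right (hvw j) _).trans (Finset.le_sup (f := fun j => P i j + w j) (Finset.mem_univ j))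

lemma mpMulV_id {n : ℕ} (v : Fin n → MP) : mpMulV mpId v = v := by
  funext i
  apply le_antisymm
  · apply Finset.sup_le
    intro j _
    by_cases hij : i = j
    · subst hij; simp [mpId]
    · simp [mpId, hij, WithBot.bot_add]
  · simpa [mpId, mpMulV] using Finset.le_sup (f := fun j => mpId i j + v j) (Finset.mem_univ i)

lemma mpStar_mulV {n : ℕ} (S : Fin n → Fin n → MP) (v : Fin n → MP) (i : Fin n) :
    mpMulV (mpStar S) v i = (Finset.range n).sup fun k => mpMulV (mpPow S k) v i := by
  show Finset.univ.sup (fun j => ((Finset.range n).sup fun k => mpPow S k i j) + v j) = _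
  calc Finset.univ.sup (fun j => ((Finset.range n).sup fun k => mpPow S k i j) + v j)
      = Finset.univ.sup (fun j => (Finset.range n).sup fun k => mpPow S k i j + v j) := by
        simp only [mp_sup_add]
    _ = (Finset.range n).sup (fun k => Finset.univ.sup fun j => mpPow S k i j + v j) :=
        Finset.sup_comm _ _ _
    _ = _ := rfl

lemma mpStar_diag {n : ℕ} (hn : 0 < n) (S : Fin n → Fin n → MP) (j : Fin n) :
    ((0:ℝ) : MP) ≤ mpStar S j j := by
  have h0 : mpPow S 0 j j = ((0:ℝ) : MP) := by simp [mpPow, mpId]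
  rw [← h0]
  exact Finset.le_sup (f := fun k => mpPow S k j j) (Finset.mem_range.2 hn)

lemma mp_pow_entry_le {n : ℕ} (B : Fin n → Fin n → MP) (F : MP) (hB : ∀ i j, B i j ≤ F) :
    ∀ m (i j : Fin n), mpPow B (m+1) i j ≤ (m+1) • F := by
  intro m
  induction m with
  | zero =>
    intro i j
    have : mpPow B 1 = B := by
      show mpMulM (mpPow B 0) B = B
      exact mpMulM_id B
    rw [this, one_nsmul]
    exact hB i j
  | succ k ih =>
    intro i j
    show Finset.univ.sup (fun l => mpPow B (k+1) i l + B l j) ≤ (k+1+1) • F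
    apply Finset.sup_le
    intro l _
    calc mpPow B (k+1) i l + B l j ≤ (k+1) • F + F := add_le_add (ih i l) (hB l j)
      _ = (k+2) • F := (succ_nsmul F (k+1)).symm

lemma mp_map_div_le (a F : MP) (m : ℕ) (hm : 1 ≤ m) (ha : a ≤ m • F) :
    a.map (fun t => t / (m : ℝ)) ≤ F := by
  induction F using WithBot.recBotCoe with
  | bot =>
    rw [mp_nsmul_bot m hm, le_bot_iff] at ha
    subst ha
    exact bot_le
  | coe c =>
    rw [mp_nsmul_coe] at ha
    induction a using WithBot.recBotCoe with
    | bot => exact bot_le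
    | coe r =>
      rw [WithBot.coe_le_coe] at ha
      rw [WithBot.map_coe, WithBot.coe_le_coe]
      show r / (m:ℝ) ≤ c
      rw [div_le_iff₀ (by exact_mod_cast hm : (0:ℝ) < m)]
      calc r ≤ m * c := ha
        _ = c * m := mul_comm _ _

lemma mp_tr_conj {n : ℕ} (A : Fin n → Fin n → MP) (x : Fin n → ℝ) (m : ℕ) :
    mpTr (mpPow (fun i j => ((-(x i) : ℝ) : MP) + A i j + (x j : MP)) m) = mpTr (mpPow A m) := by
  unfold mpTr
  rw [mpPow_conj]
  exact Finset.sup_congr rfl (fun i _ => mp_conj_cancel (x i) _)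

lemma mp_trS {n : ℕ} (A : Fin n → Fin n → MP) (θ : ℝ) (hlth : mpLam A ≤ (θ : MP)) :
    ∀ t, 1 ≤ t → t ≤ n → mpTr (mpPow (fun p q => ((-θ : ℝ) : MP) + A p q) t) ≤ 0 := by
  intro t ht1 htn
  have hsh : mpTr (mpPow (fun p q => ((-θ : ℝ) : MP) + A p q) t)
      = (((t : ℝ) * (-θ) : ℝ) : MP) + mpTr (mpPow A t) := by
    unfold mpTr
    rw [mpPow_shift]
    exact (mp_add_sup _ _ _).symm
  rw [hsh]
  have hmem : t ∈ Finset.Icc 1 n := Finset.mem_Icc.2 ⟨ht1, htn⟩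
  have hle : (mpTr (mpPow A t)).map (fun s => s / (t : ℝ)) ≤ (θ : MP) :=
    le_trans (Finset.le_sup (f := fun m => (mpTr (mpPow A m)).map (fun s => s / (m : ℝ))) hmem) hlth
  rcases hM : mpTr (mpPow A t) with _ | r
  · rw [show (none : WithBot ℝ) = (⊥ : MP) from rfl, WithBot.add_bot]; exact bot_le
  · rw [hM] at hle
    rw [show ((Option.some r : WithBot ℝ)) = ((r:ℝ):MP) from rfl] at hle ⊢
    rw [WithBot.map_coe, WithBot.coe_le_coe] at hle
    rw [← WithBot.coe_add, show (0 : MP) = ((0:ℝ) : MP) from rfl, WithBot.coe_le_coe]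
    have htpos : (0:ℝ) < t := by exact_mod_cast ht1
    rw [div_le_iff₀ htpos] at hle
    nlinarith

lemma mp_part1 {n : ℕ} (A : Fin n → Fin n → MP) (g : Fin n → MP) (h : Fin n → ℝ)
    (θ : ℝ)
    (hθ : (θ : MP) = max (mpLam A)
        ((Finset.Icc 1 n).sup fun k =>
          (Finset.univ.sup fun i =>
            ((-(h i) : ℝ) : MP) + mpMulV (mpPow A k) g i).map (fun t => t / (k : ℝ))))
    (x : Fin n → ℝ) (hx : ∀ i, g i ≤ (x i : MP) ∧ (x i : MP) ≤ (h i : MP)) :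
    (θ : MP) ≤ Finset.univ.sup fun i => Finset.univ.sup fun j =>
        ((-(x i) : ℝ) : MP) + A i j + (x j : MP) := by
  set B : Fin n → Fin n → MP := fun i j => ((-(x i) : ℝ) : MP) + A i j + (x j : MP) with hB
  set F : MP := Finset.univ.sup fun i => Finset.univ.sup fun j => B i j with hF
  have hBF : ∀ i j, B i j ≤ F := fun i j =>
    le_trans (Finset.le_sup (f := fun j => B i j) (Finset.mem_univ j))
      (Finset.le_sup (f := fun i => Finset.univ.sup fun j => B i j) (Finset.mem_univ i))
  have hpowF : ∀ m (i j : Fin n), mpPow B (m+1) i j ≤ (m+1) • F := mp_pow_entry_le B F hBF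
  have hconj : ∀ m (i j : Fin n),
      mpPow B m i j = ((-(x i) : ℝ) : MP) + mpPow A m i j + (x j : MP) := by
    intro m i j
    rw [hB, mpPow_conj]
  have hxh : ∀ i, x i ≤ h i := fun i => WithBot.coe_le_coe.1 (hx i).2
  rw [hθ]
  apply max_le
  · -- spectral radius bound
    apply Finset.sup_le
    intro m hm
    obtain ⟨m', rfl⟩ := Nat.exists_eq_add_of_le (Finset.mem_Icc.1 hm).1
    rw [add_comm 1 m']
    apply mp_map_div_le _ _ _ (Nat.le_add_left 1 m')
    have htr : mpTr (mpPow A (m'+1)) = mpTr (mpPow B (m'+1)) := (mp_tr_conj A x (m'+1)).symm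
    rw [htr]
    exact Finset.sup_le fun i _ => hpowF m' i i
  · -- h⁻ A^k g bound
    apply Finset.sup_le
    intro k hk
    obtain ⟨k', rfl⟩ := Nat.exists_eq_add_of_le (Finset.mem_Icc.1 hk).1
    rw [add_comm 1 k']
    apply mp_map_div_le _ _ _ (Nat.le_add_left 1 k')
    apply Finset.sup_le
    intro i _
    have hdist : ((-(h i) : ℝ) : MP) + mpMulV (mpPow A (k'+1)) g i
        = Finset.univ.sup fun j => ((-(h i) : ℝ) : MP) + (mpPow A (k'+1) i j + g j) :=
      mp_add_sup _ _ _
    rw [hdist]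
    apply Finset.sup_le
    intro j _
    have hmono : ((-(h i) : ℝ) : MP) + (mpPow A (k'+1) i j + g j)
        ≤ ((-(x i) : ℝ) : MP) + (mpPow A (k'+1) i j + (x j : MP)) := by
      apply add_le_add
      · exact WithBot.coe_le_coe.2 (by linarith [hxh i])
      · exact add_le_add_right (hx j).1 _
    refine hmono.trans ?_
    rw [← add_assoc, ← hconj]
    exact hpowF k' i j


/-- Solution of minimize x⁻ A x subject to g ≤ x ≤ h: the minimum equals
θ = λ ⊕ ⨁_{k=1}^{n} (h⁻ A^k g)^{1/k}, attained exactly at x = (θ⁻¹A)* u for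
regular u with g ≤ u ≤ (h⁻ (θ⁻¹A)*)⁻. -/
theorem maxplus_opt_box {n : ℕ} (A : Fin n → Fin n → MP) (g : Fin n → MP)
    (h : Fin n → ℝ) (hlam : mpLam A ≠ ⊥)
    (hgh : (Finset.univ.sup fun i => ((-(h i) : ℝ) : MP) + g i) ≤ ((0:ℝ) : MP))
    (θ : ℝ)
    (hθ : (θ : MP) = max (mpLam A)
        ((Finset.Icc 1 n).sup fun k =>
          (Finset.univ.sup fun i =>
            ((-(h i) : ℝ) : MP) + mpMulV (mpPow A k) g i).map (fun t => t / (k : ℝ)))) :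
    (∀ x : Fin n → ℝ,
      (∀ i, g i ≤ (x i : MP) ∧ (x i : MP) ≤ (h i : MP)) →
      (θ : MP) ≤ Finset.univ.sup fun i => Finset.univ.sup fun j =>
        ((-(x i) : ℝ) : MP) + A i j + (x j : MP)) ∧
    (∀ x : Fin n → ℝ,
      ((∀ i, g i ≤ (x i : MP) ∧ (x i : MP) ≤ (h i : MP)) ∧
        (Finset.univ.sup fun i => Finset.univ.sup fun j =>
          ((-(x i) : ℝ) : MP) + A i j + (x j : MP)) = (θ : MP)) ↔
      (∃ u : Fin n → ℝ,
        (∀ j, g j ≤ (u j : MP)) ∧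
        (∀ j, (u j : MP) ≤ mpInv (Finset.univ.sup fun i =>
          ((-(h i) : ℝ) : MP) + mpStar (fun p q => ((-θ : ℝ) : MP) + A p q) i j)) ∧
        ∀ i, (x i : MP) =
          mpMulV (mpStar (fun p q => ((-θ : ℝ) : MP) + A p q))
            (fun j => (u j : MP)) i)) := by
  have hn : 0 < n := by
    rcases Nat.eq_zero_or_pos n with h0 | h0
    · subst h0
      exact absurd (by simp [mpLam]) hlam
    · exact h0
  set S : Fin n → Fin n → MP := fun p q => ((-θ : ℝ) : MP) + A p q with hS
  have hlth : mpLam A ≤ (θ : MP) := hθ ▸ le_max_left _ _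
  have htrS : ∀ t, 1 ≤ t → t ≤ n → mpTr (mpPow S t) ≤ 0 := mp_trS A θ hlth
  have part1 := mp_part1 A g h θ hθ
  refine ⟨part1, ?_⟩
  intro x
  constructor
  · -- forward direction: minimizers have the claimed form with u = x
    rintro ⟨hfeas, hfx⟩
    have hSx : ∀ i, mpMulV S (fun j => ((x j : ℝ) : MP)) i ≤ ((x i : ℝ) : MP) := by
      intro i
      apply Finset.sup_le
      intro j _
      have hterm : ((-(x i) : ℝ) : MP) + A i j + ((x j : ℝ) : MP) ≤ (θ : MP) := by
        rw [← hfx]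
        exact le_trans (Finset.le_sup (f := fun j => ((-(x i) : ℝ) : MP) + A i j + (x j : MP))
            (Finset.mem_univ j))
          (Finset.le_sup (f := fun i => Finset.univ.sup fun j =>
            ((-(x i) : ℝ) : MP) + A i j + (x j : MP)) (Finset.mem_univ i))
      rcases hA : A i j with _ | a
      · show ((-θ : ℝ) : MP) + A i j + _ ≤ _
        rw [hA, show (none : WithBot ℝ) = (⊥ : MP) from rfl, WithBot.add_bot, WithBot.bot_add]
        exact bot_le
      · rw [hA, show ((Option.some a : WithBot ℝ)) = ((a:ℝ):MP) from rfl] at hterm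
        show ((-θ : ℝ) : MP) + A i j + _ ≤ _
        rw [hA, show ((Option.some a : WithBot ℝ)) = ((a:ℝ):MP) from rfl,
          ← WithBot.coe_add, ← WithBot.coe_add]
        rw [← WithBot.coe_add, ← WithBot.coe_add, WithBot.coe_le_coe] at hterm
        rw [WithBot.coe_le_coe]
        linarith
    have hSk : ∀ k i, mpMulV (mpPow S k) (fun j => ((x j : ℝ) : MP)) i ≤ ((x i : ℝ) : MP) := by
      intro k
      induction k with
      | zero => intro i; rw [show mpPow S 0 = mpId from rfl, mpMulV_id]
      | succ m ih =>
        intro i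
        rw [show mpPow S (m+1) = mpMulM (mpPow S m) S from rfl, mpMulV_assoc]
        exact le_trans (mpMulV_mono (mpPow S m) hSx i) (ih i)
    have hstar : ∀ i, mpMulV (mpStar S) (fun j => ((x j : ℝ) : MP)) i = ((x i : ℝ) : MP) := by
      intro i
      apply le_antisymm
      · rw [mpStar_mulV]
        exact Finset.sup_le fun k _ => hSk k i
      · have h0 : mpMulV (mpPow S 0) (fun j => ((x j : ℝ) : MP)) i = ((x i : ℝ) : MP) := by
          rw [show mpPow S 0 = mpId from rfl, mpMulV_id]
        rw [mpStar_mulV, ← h0]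
        exact Finset.le_sup (f := fun k => mpMulV (mpPow S k) (fun j => ((x j : ℝ) : MP)) i)
          (Finset.mem_range.2 hn)
    refine ⟨x, fun j => (hfeas j).1, ?_, fun i => (hstar i).symm⟩
    intro j
    set v : MP := Finset.univ.sup fun i => ((-(h i) : ℝ) : MP) + mpStar S i j with hv
    have hvlb : ((-(h j) : ℝ) : MP) ≤ v := by
      calc ((-(h j) : ℝ) : MP) = ((-(h j) : ℝ) : MP) + ((0:ℝ) : MP) := by
            rw [← WithBot.coe_add]; norm_num
        _ ≤ ((-(h j) : ℝ) : MP) + mpStar S j j := add_le_add_right (mpStar_diag hn S j) _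
        _ ≤ v := Finset.le_sup (f := fun i => ((-(h i) : ℝ) : MP) + mpStar S i j)
            (Finset.mem_univ j)
    have hvx : v + ((x j : ℝ) : MP) ≤ ((0:ℝ) : MP) := by
      rw [hv, mp_sup_add]
      apply Finset.sup_le
      intro i _
      have h1 : mpStar S i j + ((x j : ℝ) : MP) ≤ ((x i : ℝ) : MP) := by
        rw [← hstar i]
        exact Finset.le_sup (f := fun l => mpStar S i l + ((x l : ℝ) : MP)) (Finset.mem_univ j)
      calc ((-(h i) : ℝ) : MP) + mpStar S i j + ((x j : ℝ) : MP)
          = ((-(h i) : ℝ) : MP) + (mpStar S i j + ((x j : ℝ) : MP)) := add_assoc _ _ _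
        _ ≤ ((-(h i) : ℝ) : MP) + ((x i : ℝ) : MP) := add_le_add_right h1 _
        _ ≤ ((0:ℝ) : MP) := by
            rw [← WithBot.coe_add, WithBot.coe_le_coe]
            have := WithBot.coe_le_coe.1 (hfeas i).2
            linarith
    rcases hvc : v with _ | r
    · rw [hvc] at hvlb
      exact absurd (le_bot_iff.1 hvlb) (by simp)
    · rw [hvc, show ((Option.some r : WithBot ℝ)) = ((r:ℝ):MP) from rfl] at hvx
      rw [show ((Option.some r : WithBot ℝ)) = ((r:ℝ):MP) from rfl]
      show ((x j : ℝ) : MP) ≤ ((r : ℝ) : MP).map (fun t => -t)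
      rw [WithBot.map_coe, WithBot.coe_le_coe]
      rw [← WithBot.coe_add, WithBot.coe_le_coe] at hvx
      linarith
  · -- backward direction
    rintro ⟨u, hug, huh, hxu⟩
    have hble : ∀ k, k ≤ n → ∀ i j, mpPow S k i j ≤ mpStar S i j := by
      intro k hk i j
      rcases lt_or_eq_of_le hk with hlt | rfl
      · exact Finset.le_sup (f := fun k => mpPow S k i j) (Finset.mem_range.2 hlt)
      · exact pow_n_le_star hn S htrS i j
    -- v_j is finite and bounds
    have hvfin : ∀ j : Fin n, ∃ r : ℝ,
        (Finset.univ.sup fun i => ((-(h i) : ℝ) : MP) + mpStar S i j) = ((r : ℝ) : MP)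
        ∧ u j ≤ -r := by
      intro j
      set v : MP := Finset.univ.sup fun i => ((-(h i) : ℝ) : MP) + mpStar S i j with hv
      have hvlb : ((-(h j) : ℝ) : MP) ≤ v := by
        calc ((-(h j) : ℝ) : MP) = ((-(h j) : ℝ) : MP) + ((0:ℝ) : MP) := by
              rw [← WithBot.coe_add]; norm_num
          _ ≤ ((-(h j) : ℝ) : MP) + mpStar S j j := add_le_add_right (mpStar_diag hn S j) _
          _ ≤ v := Finset.le_sup (f := fun i => ((-(h i) : ℝ) : MP) + mpStar S i j)
              (Finset.mem_univ j)
      rcases hvc : v with _ | r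
      · rw [hvc] at hvlb
        exact absurd (le_bot_iff.1 hvlb) (by simp)
      · refine ⟨r, by rfl, ?_⟩
        have := huh j
        rw [← hv, hvc] at this
        rw [show ((Option.some r : WithBot ℝ)) = ((r:ℝ):MP) from rfl] at this
        unfold mpInv at this
        rw [WithBot.map_coe, WithBot.coe_le_coe] at this
        exact this
    have hfeas : ∀ i, g i ≤ (x i : MP) ∧ (x i : MP) ≤ (h i : MP) := by
      intro i
      constructor
      · rw [hxu i]
        calc g i ≤ ((u i : ℝ) : MP) := hug i
          _ = ((0:ℝ) : MP) + ((u i : ℝ) : MP) := by rw [← WithBot.coe_add]; norm_num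
          _ ≤ mpStar S i i + ((u i : ℝ) : MP) := add_le_add_left (mpStar_diag hn S i) _
          _ ≤ mpMulV (mpStar S) (fun j => ((u j : ℝ) : MP)) i :=
            Finset.le_sup (f := fun l => mpStar S i l + ((u l : ℝ) : MP)) (Finset.mem_univ i)
      · rw [hxu i]
        apply Finset.sup_le
        intro j _
        obtain ⟨r, hr, hur⟩ := hvfin j
        have hstarle : ((-(h i) : ℝ) : MP) + mpStar S i j ≤ ((r : ℝ) : MP) := by
          rw [← hr]
          exact Finset.le_sup (f := fun i => ((-(h i) : ℝ) : MP) + mpStar S i j)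
            (Finset.mem_univ i)
        rcases hsc : mpStar S i j with _ | s
        · rw [show (none : WithBot ℝ) = (⊥ : MP) from rfl, WithBot.bot_add]
          exact bot_le
        · rw [hsc, show ((Option.some s : WithBot ℝ)) = ((s:ℝ):MP) from rfl] at hstarle
          rw [show ((Option.some s : WithBot ℝ)) = ((s:ℝ):MP) from rfl,
            ← WithBot.coe_add, WithBot.coe_le_coe]
          rw [← WithBot.coe_add, WithBot.coe_le_coe] at hstarle
          linarith
    have hSxle : ∀ i j, S i j + (x j : MP) ≤ (x i : MP) := by
      intro i j
      rw [hxu j, hxu i, mpStar_mulV, mp_add_sup]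
      apply Finset.sup_le
      intro k hk
      have hk' := Finset.mem_range.1 hk
      show S i j + mpMulV (mpPow S k) (fun l => ((u l : ℝ) : MP)) j ≤ _
      rw [show mpMulV (mpPow S k) (fun l => ((u l : ℝ) : MP)) j
        = Finset.univ.sup (fun l => mpPow S k j l + ((u l : ℝ) : MP)) from rfl, mp_add_sup]
      apply Finset.sup_le
      intro l _
      have h1 : S i j + mpPow S k j l ≤ mpPow S (k+1) i l := by
        rw [mpPow_succ' S k]
        exact Finset.le_sup (f := fun m => S i m + mpPow S k m l) (Finset.mem_univ j)
      calc S i j + (mpPow S k j l + ((u l : ℝ) : MP))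
          = (S i j + mpPow S k j l) + ((u l : ℝ) : MP) := (add_assoc _ _ _).symm
        _ ≤ mpPow S (k+1) i l + ((u l : ℝ) : MP) := add_le_add_left h1 _
        _ ≤ mpStar S i l + ((u l : ℝ) : MP) :=
            add_le_add_left (hble (k+1) (Nat.succ_le_of_lt hk') i l) _
        _ ≤ mpMulV (mpStar S) (fun l => ((u l : ℝ) : MP)) i :=
            Finset.le_sup (f := fun l => mpStar S i l + ((u l : ℝ) : MP)) (Finset.mem_univ l)
    have hobjle : (Finset.univ.sup fun i => Finset.univ.sup fun j =>
        ((-(x i) : ℝ) : MP) + A i j + (x j : MP)) ≤ (θ : MP) := by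
      apply Finset.sup_le
      intro i _
      apply Finset.sup_le
      intro j _
      have := hSxle i j
      rcases hA : A i j with _ | a
      · rw [show (none : WithBot ℝ) = (⊥ : MP) from rfl, WithBot.add_bot, WithBot.bot_add]
        exact bot_le
      · rw [show S i j = ((-θ : ℝ) : MP) + A i j from rfl, hA,
          show ((Option.some a : WithBot ℝ)) = ((a:ℝ):MP) from rfl,
          ← WithBot.coe_add, ← WithBot.coe_add, WithBot.coe_le_coe] at this
        rw [show ((Option.some a : WithBot ℝ)) = ((a:ℝ):MP) from rfl,
          ← WithBot.coe_add, ← WithBot.coe_add, WithBot.coe_le_coe]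
        linarith
    exact ⟨hfeas, le_antisymm hobjle (part1 x hfeas)⟩
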